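/- arXiv:1204.2219 — 3 statements merged into one kernel-verified Lean document; each statement's English description precedes it below -/
import Mathlib

section
/- A natural number z > 1 is composite if and only if there exist natural numbers a, b, c, d with 0 < a, b, c, d < z such that z = a + b - c - d (as integers) and z² = a² + b² - c² - d². -/
theorem composite_iff_exists_abcd (z : ℕ) (hz : 1 < z) :
    (∃ x y : ℕ, 1 < x ∧ 1 < y ∧ z = x * y) ↔
      ∃ a b c d : ℕ,
        0 < a ∧ a < z ∧ 0 < b ∧ b < z ∧ 0 < c ∧ c < z ∧ 0 < d ∧ d < z ∧
        (z : ℤ) = (a : ℤ) + b - c - d ∧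
        (z : ℤ) ^ 2 = (a : ℤ) ^ 2 + (b : ℤ) ^ 2 - (c : ℤ) ^ 2 - (d : ℤ) ^ 2 := by
  constructor
  · rintro ⟨x, y, hx, hy, rfl⟩
    have hxy : x + y ≤ x * y := by nlinarith
    have h4 : 4 ≤ x * y := by nlinarith
    refine ⟨x + y - 1, x * y - 1, y - 1, x - 1, by omega, by omega, by omega, by omega,
      by omega, by omega, by omega, by omega, ?_, ?_⟩
    · rw [Nat.cast_sub (by omega : 1 ≤ x + y), Nat.cast_sub (by omega : 1 ≤ x * y),
        Nat.cast_sub (by omega : 1 ≤ y), Nat.cast_sub (by omega : 1 ≤ x)]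
      push_cast
      ring
    · rw [Nat.cast_sub (by omega : 1 ≤ x + y), Nat.cast_sub (by omega : 1 ≤ x * y),
        Nat.cast_sub (by omega : 1 ≤ y), Nat.cast_sub (by omega : 1 ≤ x)]
      push_cast
      ring
  · rintro ⟨a, b, c, d, ha0, haz, hb0, hbz, hc0, hcz, hd0, hdz, h1, h2⟩
    by_contra hcomp
    have hp : z.Prime := by
      rw [Nat.prime_def_lt]
      refine ⟨hz, fun m hm hdvd => ?_⟩
      by_contra hm1
      obtain ⟨k, hk⟩ := hdvd
      have hm0 : m ≠ 0 := by rintro rfl; simp at hk; omega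
      have hk0 : k ≠ 0 := by rintro rfl; simp at hk; omega
      have hk1 : k ≠ 1 := by rintro rfl; simp at hk; omega
      exact hcomp ⟨m, k, by omega, by omega, hk⟩
    have hpz : Prime (z : ℤ) := Nat.prime_iff_prime_int.1 hp
    have key : ((a : ℤ) - c) * ((a + c) - (b + d)) = (z : ℤ) * ((z : ℤ) - b - d) := by
      linear_combination ((b : ℤ) + d) * h1 - h2
    have hdvd : (z : ℤ) ∣ ((a : ℤ) - c) * ((a + c) - (b + d)) :=
      ⟨(z : ℤ) - b - d, key⟩
    rcases hpz.2.2 _ _ hdvd with h | h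
    · have hpos : (0 : ℤ) < (a : ℤ) - c := by omega
      have := Int.le_of_dvd hpos h
      omega
    · obtain ⟨k, hk⟩ := h
      have hz0 : (0 : ℤ) < (z : ℤ) := by omega
      have hub : (z : ℤ) * k < 2 * z := by omega
      have hlb : -(2 * (z : ℤ)) < (z : ℤ) * k := by omega
      have hk2 : k < 2 := by nlinarith
      have hk3 : -2 < k := by nlinarith
      have : k = -1 ∨ k = 0 ∨ k = 1 := by omega
      rcases this with rfl | rfl | rfl
      · omega
      · exact hcomp ⟨2, a - d, by omega, by omega, by omega⟩
      · omega
end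

section
/- Suppose positive integers z, b, c, d satisfy b - c - d > 0 and z(b - c - d) = (b - c)(b - d), with z > b, c, d. Then z is composite: there exist natural numbers t₁, t₂, s₁, s₂ ≥ 1 with z = (t₁ + s₁)(t₂ + s₂). -/
lemma nat_comp (z E B D : ℕ) (hE : 0 < E) (heq : z * E = B * D)
    (hBz : B < z) (hDz : D < z) : ∃ m n, 2 ≤ m ∧ 2 ≤ n ∧ z = m * n := by
  have hg : 0 < Nat.gcd B E := Nat.gcd_pos_of_pos_right _ hE
  set g := Nat.gcd B E with hgdef
  have hmB : g * (B / g) = B := Nat.mul_div_cancel' (Nat.gcd_dvd_left B E)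
  have hfE : g * (E / g) = E := Nat.mul_div_cancel' (Nat.gcd_dvd_right B E)
  have hcop : Nat.Coprime (B / g) (E / g) := Nat.coprime_div_gcd_div_gcd hg
  have hf0 : 0 < E / g := by
    rcases Nat.eq_zero_or_pos (E / g) with h | h
    · rw [h, Nat.mul_zero] at hfE; omega
    · exact h
  have key : z * (E / g) = (B / g) * D := by
    have : g * (z * (E / g)) = g * ((B / g) * D) := by
      calc g * (z * (E / g)) = z * (g * (E / g)) := by ring
        _ = z * E := by rw [hfE]
        _ = B * D := heq
        _ = (g * (B / g)) * D := by rw [hmB]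
        _ = g * ((B / g) * D) := by ring
    exact Nat.eq_of_mul_eq_mul_left hg this
  have hdvd : (E / g) ∣ D := by
    have h1 : (E / g) ∣ (B / g) * D := ⟨z, by rw [← key]; ring⟩
    exact (Nat.Coprime.dvd_of_dvd_mul_left hcop.symm h1)
  obtain ⟨n, hn⟩ := hdvd
  have hz : z = (B / g) * n := by
    have : z * (E / g) = ((B / g) * n) * (E / g) := by
      rw [key, hn]; ring
    exact Nat.eq_of_mul_eq_mul_right hf0 this
  have hB0 : 0 < B := by
    rcases Nat.eq_zero_or_pos B with h | h
    · rw [h, Nat.zero_mul] at heq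
      have : z = 0 := by
        rcases Nat.mul_eq_zero.mp heq with h' | h' <;> omega
      omega
    · exact h
  have hm0 : 0 < B / g := by
    rcases Nat.eq_zero_or_pos (B / g) with h | h
    · rw [h, Nat.mul_zero] at hmB; omega
    · exact h
  have hn0 : 0 < n := by
    rcases Nat.eq_zero_or_pos n with h | h
    · rw [h, Nat.mul_zero] at hz; omega
    · exact h
  refine ⟨B / g, n, ?_, ?_, hz⟩
  · -- if B/g = 1 then z = n ≤ (E/g)*n = D < z
    by_contra h
    have h1 : B / g = 1 := by omega
    rw [h1, Nat.one_mul] at hz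
    have : n ≤ D := by rw [hn]; exact Nat.le_mul_of_pos_left n hf0
    omega
  · by_contra h
    have h1 : n = 1 := by omega
    rw [h1, Nat.mul_one] at hz
    have : B / g ≤ B := Nat.div_le_self _ _
    omega

theorem z_is_composite (z b c d : ℤ)
    (hz : 0 < z) (hb : 0 < b) (hc : 0 < c) (hd : 0 < d)
    (ht : 0 < b - c - d)
    (heq : z * (b - c - d) = (b - c) * (b - d))
    (hbz : b < z) (hcz : c < z) (hdz : d < z) :
    ∃ t₁ t₂ s₁ s₂ : ℕ, 1 ≤ t₁ ∧ 1 ≤ t₂ ∧ 1 ≤ s₁ ∧ 1 ≤ s₂ ∧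
      z = ((t₁ + s₁) * (t₂ + s₂) : ℕ) := by
  have hB : 0 < b - c := by omega
  have hD : 0 < b - d := by omega
  set Z := z.toNat
  set E := (b - c - d).toNat
  set B := (b - c).toNat
  set D := (b - d).toNat
  have hZ' : (Z : ℤ) = z := Int.toNat_of_nonneg hz.le
  have hE' : (E : ℤ) = b - c - d := Int.toNat_of_nonneg ht.le
  have hB' : (B : ℤ) = b - c := Int.toNat_of_nonneg hB.le
  have hD' : (D : ℤ) = b - d := Int.toNat_of_nonneg hD.le
  have hEpos : 0 < E := by omega
  have heqN : Z * E = B * D := by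
    have : ((Z * E : ℕ) : ℤ) = ((B * D : ℕ) : ℤ) := by
      push_cast
      rw [hZ', hE', hB', hD']; exact heq
    exact_mod_cast this
  have hBZ : B < Z := by omega
  have hDZ : D < Z := by omega
  obtain ⟨m, n, hm, hn, hmn⟩ := nat_comp Z E B D hEpos heqN hBZ hDZ
  refine ⟨1, 1, m - 1, n - 1, le_refl 1, le_refl 1, by omega, by omega, ?_⟩
  have e1 : 1 + (m - 1) = m := by omega
  have e2 : 1 + (n - 1) = n := by omega
  rw [e1, e2, ← hmn, hZ']
end

section
/- For all natural numbers n, m with m ≥ 1: n^m = Σ_{k=0}^{m-1} A(m,k) · C(n+k, m), where A(m,k) is the Eulerian number and C denotes the binomial coefficient. -/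
/-- The Eulerian number A(m,k), via the explicit formula. -/
def eulerian (m k : ℕ) : ℤ :=
  ∑ i ∈ Finset.range (k + 1), (-1) ^ i * (Nat.choose (m + 1) i) * ((k + 1 - i : ℕ) : ℤ) ^ m

lemma choose_succ_int (n j : ℕ) :
    ((j:ℤ)+1) * (Nat.choose n (j+1)) = ((n:ℤ) - j) * (Nat.choose n j) := by
  rcases le_or_gt j n with h | h
  · have h1 := Nat.choose_succ_right_eq n j
    zify [h] at h1
    linarith
  · rw [Nat.choose_eq_zero_of_lt h, Nat.choose_eq_zero_of_lt (by omega)]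
    simp

lemma mul_choose_int (n k m : ℕ) :
    (n:ℤ) * (Nat.choose (n+k) m) =
      ((k:ℤ)+1) * (Nat.choose (n+k) (m+1)) + ((m:ℤ)-(k:ℤ)) * (Nat.choose (n+(k+1)) (m+1)) := by
  have pascal : Nat.choose (n+k+1) (m+1) = Nat.choose (n+k) m + Nat.choose (n+k) (m+1) :=
    Nat.choose_succ_succ (n+k) m
  have h := choose_succ_int (n+k) m
  have e : n + (k+1) = n + k + 1 := by omega
  rw [e, pascal]
  push_cast
  push_cast at h
  linarith

lemma eulerian_zero_right (m : ℕ) : eulerian m 0 = 1 := by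
  simp [eulerian]

lemma eulerian_rec (m k : ℕ) :
    eulerian (m+1) (k+1) =
      ((k:ℤ)+2) * eulerian m (k+1) + (((m+1:ℕ):ℤ)-(k:ℤ)-1) * eulerian m k := by
  unfold eulerian
  rw [Finset.mul_sum, Finset.mul_sum]
  rw [Finset.sum_range_succ' (fun i => (-1:ℤ)^i * (Nat.choose (m+1+1) i) * ((k+1+1-i : ℕ) : ℤ) ^ (m+1)) (k+1)]
  rw [Finset.sum_range_succ' (fun i => ((k:ℤ)+2) * ((-1:ℤ)^i * (Nat.choose (m+1) i) * ((k+1+1-i : ℕ) : ℤ) ^ m)) (k+1)]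
  have hsum : (∑ i ∈ Finset.range (k+1),
        (-1:ℤ)^(i+1) * (Nat.choose (m+1+1) (i+1)) * ((k+1+1-(i+1) : ℕ) : ℤ) ^ (m+1))
      = (∑ i ∈ Finset.range (k+1),
          ((k:ℤ)+2) * ((-1:ℤ)^(i+1) * (Nat.choose (m+1) (i+1)) * ((k+1+1-(i+1) : ℕ) : ℤ) ^ m))
        + ∑ i ∈ Finset.range (k+1),
            (((m+1:ℕ):ℤ)-(k:ℤ)-1) * ((-1:ℤ)^i * (Nat.choose (m+1) i) * ((k+1-i : ℕ) : ℤ) ^ m) := by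
    rw [← Finset.sum_add_distrib]
    apply Finset.sum_congr rfl
    intro i hi
    have hik : i ≤ k := by
      have := Finset.mem_range.mp hi; omega
    have e1 : k+1+1-(i+1) = k+1-i := by omega
    simp only [e1]
    have ha : ((k+1-i:ℕ):ℤ) = (k:ℤ)+1-(i:ℤ) := by omega
    rw [ha]
    have hp : (Nat.choose (m+1+1) (i+1) : ℤ)
        = (Nat.choose (m+1) i : ℤ) + (Nat.choose (m+1) (i+1) : ℤ) := by
      exact_mod_cast Nat.choose_succ_succ (m+1) i
    rw [hp]
    have hc := choose_succ_int (m+1) i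
    push_cast at hc ⊢
    linear_combination ((-1:ℤ)^i * ((k:ℤ)+1-(i:ℤ))^m) * hc
  have h0 : ((-1:ℤ)^0 * (Nat.choose (m+1+1) 0) * ((k+1+1-0 : ℕ) : ℤ) ^ (m+1))
      = ((k:ℤ)+2) * ((-1:ℤ)^0 * (Nat.choose (m+1) 0) * ((k+1+1-0 : ℕ) : ℤ) ^ m) := by
    simp only [Nat.sub_zero, Nat.choose_zero_right, pow_zero, Nat.cast_one, one_mul, mul_one]
    push_cast
    ring
  linarith [hsum, h0]

lemma eulerian_eq_zero (m k : ℕ) (hmk : m ≤ k) (hk : 1 ≤ k) : eulerian m k = 0 := by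
  induction m generalizing k with
  | zero =>
      obtain ⟨j, rfl⟩ : ∃ j, k = j + 1 := ⟨k - 1, by omega⟩
      unfold eulerian
      rw [Finset.sum_range_succ', Finset.sum_range_succ']
      simp [Nat.choose_succ_succ]
  | succ m ih =>
      obtain ⟨j, rfl⟩ : ∃ j, k = j + 1 := ⟨k - 1, by omega⟩
      rw [eulerian_rec]
      rcases Nat.eq_zero_or_pos j with hj | hj
      · subst hj
        have hm : m = 0 := by omega
        subst hm
        rw [ih 1 (by omega) le_rfl]
        norm_num
      · rw [ih (j+1) (by omega) (by omega), ih j (by omega) hj]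
        ring

theorem worpitzky (n m : ℕ) (hm : 1 ≤ m) :
    (n : ℤ) ^ m = ∑ k ∈ Finset.range m, eulerian m k * (Nat.choose (n + k) m : ℤ) := by
  induction m, hm using Nat.le_induction with
  | base =>
      simp [eulerian_zero_right]
  | succ m hm ih =>
      obtain ⟨m', rfl⟩ : ∃ m', m = m' + 1 := ⟨m - 1, by omega⟩
      have step : (n:ℤ)^(m'+1+1)
          = ∑ k ∈ Finset.range (m'+1), eulerian (m'+1) k *
              (((k:ℤ)+1) * (Nat.choose (n+k) (m'+1+1)) +
                (((m'+1:ℕ):ℤ)-(k:ℤ)) * (Nat.choose (n+(k+1)) (m'+1+1))) := by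
        rw [pow_succ, ih, Finset.sum_mul]
        apply Finset.sum_congr rfl
        intro k _
        have h := mul_choose_int n k (m'+1)
        push_cast at h ⊢
        linear_combination (eulerian (m'+1) k) * h
      have split : ∑ k ∈ Finset.range (m'+1), eulerian (m'+1) k *
              (((k:ℤ)+1) * (Nat.choose (n+k) (m'+1+1)) +
                (((m'+1:ℕ):ℤ)-(k:ℤ)) * (Nat.choose (n+(k+1)) (m'+1+1)))
          = (∑ k ∈ Finset.range (m'+1), ((k:ℤ)+1) * eulerian (m'+1) k * (Nat.choose (n+k) (m'+1+1)))
            + ∑ k ∈ Finset.range (m'+1), (((m'+1:ℕ):ℤ)-(k:ℤ)) * eulerian (m'+1) k * (Nat.choose (n+(k+1)) (m'+1+1)) := by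
        rw [← Finset.sum_add_distrib]
        apply Finset.sum_congr rfl
        intro k _
        ring
      have hS1 : (∑ k ∈ Finset.range (m'+1), ((k:ℤ)+1) * eulerian (m'+1) k * (Nat.choose (n+k) (m'+1+1)))
          = (∑ k ∈ Finset.range m', ((k:ℤ)+2) * eulerian (m'+1) (k+1) * (Nat.choose (n+(k+1)) (m'+1+1)))
            + (Nat.choose (n+0) (m'+1+1) : ℤ) := by
        rw [Finset.sum_range_succ' (fun k => ((k:ℤ)+1) * eulerian (m'+1) k * (Nat.choose (n+k) (m'+1+1)))]
        have e1 : (∑ k ∈ Finset.range m', (((k+1:ℕ):ℤ)+1) * eulerian (m'+1) (k+1) * (Nat.choose (n+(k+1)) (m'+1+1)))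
            = ∑ k ∈ Finset.range m', ((k:ℤ)+2) * eulerian (m'+1) (k+1) * (Nat.choose (n+(k+1)) (m'+1+1)) := by
          apply Finset.sum_congr rfl
          intro k _
          push_cast
          ring
        have e2 : (((0:ℕ):ℤ)+1) * eulerian (m'+1) 0 * (Nat.choose (n+0) (m'+1+1)) = (Nat.choose (n+0) (m'+1+1) : ℤ) := by
          rw [eulerian_zero_right]
          push_cast
          ring
        rw [e1, e2]
      have hT : (∑ k ∈ Finset.range (m'+1+1), eulerian (m'+1+1) k * (Nat.choose (n+k) (m'+1+1) : ℤ))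
          = (∑ k ∈ Finset.range (m'+1), ((k:ℤ)+2) * eulerian (m'+1) (k+1) * (Nat.choose (n+(k+1)) (m'+1+1)))
            + (∑ k ∈ Finset.range (m'+1), (((m'+1:ℕ):ℤ)-(k:ℤ)) * eulerian (m'+1) k * (Nat.choose (n+(k+1)) (m'+1+1)))
            + (Nat.choose (n+0) (m'+1+1) : ℤ) := by
        rw [Finset.sum_range_succ' (fun k => eulerian (m'+1+1) k * (Nat.choose (n+k) (m'+1+1) : ℤ))]
        have e1 : (∑ k ∈ Finset.range (m'+1), eulerian (m'+1+1) (k+1) * (Nat.choose (n+(k+1)) (m'+1+1) : ℤ))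
            = (∑ k ∈ Finset.range (m'+1), ((k:ℤ)+2) * eulerian (m'+1) (k+1) * (Nat.choose (n+(k+1)) (m'+1+1)))
              + ∑ k ∈ Finset.range (m'+1), (((m'+1:ℕ):ℤ)-(k:ℤ)) * eulerian (m'+1) k * (Nat.choose (n+(k+1)) (m'+1+1)) := by
          rw [← Finset.sum_add_distrib]
          apply Finset.sum_congr rfl
          intro k _
          rw [eulerian_rec (m'+1) k]
          push_cast
          ring
        have e2 : eulerian (m'+1+1) 0 * (Nat.choose (n+0) (m'+1+1) : ℤ) = (Nat.choose (n+0) (m'+1+1) : ℤ) := by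
          rw [eulerian_zero_right]; ring
        rw [e1, e2]
      have hfull : (∑ k ∈ Finset.range (m'+1), ((k:ℤ)+2) * eulerian (m'+1) (k+1) * (Nat.choose (n+(k+1)) (m'+1+1)))
          = ∑ k ∈ Finset.range m', ((k:ℤ)+2) * eulerian (m'+1) (k+1) * (Nat.choose (n+(k+1)) (m'+1+1)) := by
        rw [Finset.sum_range_succ, eulerian_eq_zero (m'+1) (m'+1) le_rfl (by omega)]
        ring
      linarith [step, split, hS1, hT, hfull]
end
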